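/- arXiv:1712.08963 — 10 statements merged into one kernel-verified Lean document; each statement's English description precedes it below -/
import Mathlib

section
/- For submodular monotone set functions β and γ on subsets of a finite set V, define the iterative pruning sequences A_0 = ∅, B_0 = V, A_{t+1} = A_t ∪ {v ∈ B_t \ A_t : β(B_t) − β(B_t \ {v}) − (γ(A_t ∪ {v}) − γ(A_t)) > 0}, and B_{t+1} = B_t \ {v ∈ B_t \ A_t : β(A_t ∪ {v}) − β(A_t) − (γ(B_t) − γ(B_t \ {v})) < 0}. Then for every t ≥ 0, A_t ⊆ A_{t+1} ⊆ B_{t+1} ⊆ B_t. -/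
open Finset

def Submodular {V : Type*} [DecidableEq V] (f : Finset V → ℝ) : Prop :=
  ∀ S T : Finset V, ∀ v, S ⊆ T → v ∉ T → f (insert v T) - f T ≤ f (insert v S) - f S

def MonotoneSet {V : Type*} [DecidableEq V] (f : Finset V → ℝ) : Prop :=
  ∀ S T : Finset V, S ⊆ T → f S ≤ f T

theorem pruning_chain {V : Type*} [Fintype V] [DecidableEq V]
    (β γ : Finset V → ℝ)
    (hβ : Submodular β) (hγ : Submodular γ)
    (hβm : MonotoneSet β) (hγm : MonotoneSet γ)
    (hβ0 : β ∅ = 0) (hγ0 : γ ∅ = 0)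
    (A B : ℕ → Finset V)
    (hA0 : A 0 = ∅) (hB0 : B 0 = Finset.univ)
    (hA : ∀ t v, v ∈ A (t+1) ↔ v ∈ A t ∨ (v ∈ B t ∧ v ∉ A t ∧
      β (B t) - β (B t \ {v}) - (γ (insert v (A t)) - γ (A t)) > 0))
    (hB : ∀ t v, v ∈ B (t+1) ↔ v ∈ B t ∧ ¬ (v ∈ B t ∧ v ∉ A t ∧
      β (insert v (A t)) - β (A t) - (γ (B t) - γ (B t \ {v})) < 0)) :
    ∀ t, A t ⊆ A (t+1) ∧ A (t+1) ⊆ B (t+1) ∧ B (t+1) ⊆ B t := by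
  -- step: if A t ⊆ B t then A (t+1) ⊆ B (t+1)
  have key : ∀ t, A t ⊆ B t → A (t+1) ⊆ B (t+1) := by
    intro t hAB v hv
    rw [hA] at hv
    rw [hB]
    rcases hv with hv | ⟨hvB, hvA, hgain⟩
    · exact ⟨hAB hv, fun h => h.2.1 hv⟩
    · refine ⟨hvB, fun h => ?_⟩
      have hloss := h.2.2
      have hsub : A t ⊆ B t \ {v} := by
        intro x hx
        simp only [mem_sdiff, mem_singleton]
        exact ⟨hAB hx, fun he => hvA (he ▸ hx)⟩
      have hvnot : v ∉ B t \ {v} := by simp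
      have hins : insert v (B t \ {v}) = B t := by
        ext x; simp only [mem_insert, mem_sdiff, mem_singleton]
        constructor
        · rintro (rfl | ⟨h1, _⟩) <;> [exact hvB; exact h1]
        · intro h; by_cases hx : x = v
          · exact Or.inl hx
          · exact Or.inr ⟨h, hx⟩
      have hβsub := hβ (A t) (B t \ {v}) v hsub hvnot
      have hγsub := hγ (A t) (B t \ {v}) v hsub hvnot
      rw [hins] at hβsub hγsub
      linarith
  have hABall : ∀ t, A t ⊆ B t := by
    intro t
    induction t with
    | zero => rw [hA0, hB0]; exact empty_subset _
    | succ n ih => exact key n ih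
  intro t
  refine ⟨fun v hv => (hA t v).mpr (Or.inl hv), key t (hABall t),
    fun v hv => ((hB t v).mp hv).1⟩
end

section
/- With the iterative pruning sequences A_t, B_t as defined (A_0 = ∅, B_0 = V, A_{t+1} adds nodes v ∈ B_t \ A_t with β(v | B_t \ {v}) − γ(v | A_t) > 0, B_{t+1} removes nodes v ∈ B_t \ A_t with β(v | A_t) − γ(v | B_t \ {v}) < 0), let φ = β − γ and for any S ⊆ V set S_t = (S ∩ B_t) ∪ A_t. Then φ(S_t) ≤ φ(S_{t+1}) for all t ≥ 0, with equality if and only if S_t = S_{t+1}. -/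
open Finset

lemma exchange_aux {V : Type*} [DecidableEq V] (φ : Finset V → ℝ) (L U : Finset V) :
    ∀ n : ℕ, ∀ X Y : Finset V, (X \ Y).card + (Y \ X).card ≤ n →
    L ⊆ X → X ⊆ U → L ⊆ Y → Y ⊆ U →
    (∀ v ∈ Y \ X, ∀ Z, L ⊆ Z → Z ⊆ U → v ∉ Z → φ Z < φ (insert v Z)) →
    (∀ v ∈ X \ Y, ∀ Z, L ⊆ Z → Z ⊆ U → v ∉ Z → φ (insert v Z) < φ Z) →
    X = Y ∨ φ X < φ Y := by
  intro n
  induction n with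
  | zero =>
    intro X Y hc _ _ _ _ _ _
    left
    have h1 : X \ Y = ∅ := Finset.card_eq_zero.mp (by omega)
    have h2 : Y \ X = ∅ := Finset.card_eq_zero.mp (by omega)
    exact Finset.Subset.antisymm (Finset.sdiff_eq_empty_iff_subset.mp h1)
      (Finset.sdiff_eq_empty_iff_subset.mp h2)
  | succ n ih =>
    intro X Y hc hLX hXU hLY hYU hp hm
    by_cases hne : X = Y
    · exact Or.inl hne
    right
    rcases (Y \ X).eq_empty_or_nonempty with he | ⟨v, hv⟩
    · -- Y ⊆ X, so X \ Y nonempty; remove an element of X \ Y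
      have hXY : (X \ Y).Nonempty := by
        rcases (X \ Y).eq_empty_or_nonempty with h | h
        · exfalso; exact hne (Finset.Subset.antisymm (Finset.sdiff_eq_empty_iff_subset.mp h)
            (Finset.sdiff_eq_empty_iff_subset.mp he))
        · exact h
      obtain ⟨v, hv⟩ := hXY
      have hvX : v ∈ X := (Finset.mem_sdiff.mp hv).1
      have hvY : v ∉ Y := (Finset.mem_sdiff.mp hv).2
      have hvL : v ∉ L := fun h => hvY (hLY h)
      set X' := X.erase v with hX'
      have hins : insert v X' = X := Finset.insert_erase hvX
      have hLX' : L ⊆ X' := fun a ha => Finset.mem_erase.mpr ⟨fun h => hvL (h ▸ ha), hLX ha⟩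
      have hX'U : X' ⊆ U := (Finset.erase_subset v X).trans hXU
      have h1 : φ X < φ X' := by
        have := hm v hv X' hLX' hX'U (Finset.notMem_erase v X)
        rwa [hins] at this
      have hd1 : X' \ Y = (X \ Y).erase v := by
        ext a; simp only [hX', Finset.mem_erase, Finset.mem_sdiff]; tauto
      have hd2 : Y \ X' = Y \ X := by
        ext a
        simp only [hX', Finset.mem_erase, Finset.mem_sdiff]
        constructor
        · rintro ⟨ha, h⟩; exact ⟨ha, fun hx => h ⟨fun hav => hvY (hav ▸ ha), hx⟩⟩
        · rintro ⟨ha, h⟩; exact ⟨ha, fun hx => h hx.2⟩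
      have hcard : (X' \ Y).card + (Y \ X').card ≤ n := by
        rw [hd1, hd2, Finset.card_erase_of_mem hv]
        have : 0 < (X \ Y).card := Finset.card_pos.mpr ⟨v, hv⟩
        omega
      have h2 := ih X' Y hcard hLX' hX'U hLY hYU
        (by rw [hd2]; exact hp)
        (by intro w hw; exact hm w (hd1 ▸ hw |> (Finset.erase_subset v (X \ Y))))
      rcases h2 with h2 | h2
      · rwa [h2] at h1
      · linarith
    · -- insert an element of Y \ X
      have hvY : v ∈ Y := (Finset.mem_sdiff.mp hv).1
      have hvX : v ∉ X := (Finset.mem_sdiff.mp hv).2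
      set X' := insert v X with hX'
      have hLX' : L ⊆ X' := hLX.trans (Finset.subset_insert v X)
      have hX'U : X' ⊆ U := Finset.insert_subset (hYU hvY) hXU
      have h1 : φ X < φ X' := hp v hv X hLX hXU hvX
      have hd1 : X' \ Y = X \ Y := by
        ext a
        simp only [hX', Finset.mem_insert, Finset.mem_sdiff]
        constructor
        · rintro ⟨ha | ha, h⟩
          · exact absurd hvY (ha ▸ h)
          · exact ⟨ha, h⟩
        · rintro ⟨ha, h⟩; exact ⟨Or.inr ha, h⟩
      have hd2 : Y \ X' = (Y \ X).erase v := by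
        ext a; simp only [hX', Finset.mem_insert, Finset.mem_erase, Finset.mem_sdiff]; tauto
      have hcard : (X' \ Y).card + (Y \ X').card ≤ n := by
        rw [hd1, hd2, Finset.card_erase_of_mem hv]
        have : 0 < (Y \ X).card := Finset.card_pos.mpr ⟨v, hv⟩
        omega
      have h2 := ih X' Y hcard hLX' hX'U hLY hYU
        (by intro w hw; exact hp w (hd2 ▸ hw |> (Finset.erase_subset v (Y \ X))))
        (by rw [hd1]; exact hm)
      rcases h2 with h2 | h2
      · rwa [h2] at h1
      · linarith

theorem pruning_improves {V : Type*} [Fintype V] [DecidableEq V]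
    (β γ : Finset V → ℝ)
    (hβ : Submodular β) (hγ : Submodular γ)
    (A B : ℕ → Finset V)
    (hA0 : A 0 = ∅) (hB0 : B 0 = Finset.univ)
    (hA : ∀ t v, v ∈ A (t+1) ↔ v ∈ A t ∨ (v ∈ B t ∧ v ∉ A t ∧
      β (B t) - β (B t \ {v}) - (γ (insert v (A t)) - γ (A t)) > 0))
    (hB : ∀ t v, v ∈ B (t+1) ↔ v ∈ B t ∧ ¬ (v ∈ B t ∧ v ∉ A t ∧
      β (insert v (A t)) - β (A t) - (γ (B t) - γ (B t \ {v})) < 0))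
    (hchain : ∀ t, A t ⊆ A (t+1) ∧ A (t+1) ⊆ B (t+1) ∧ B (t+1) ⊆ B t)
    (φ : Finset V → ℝ) (hφ : ∀ S, φ S = β S - γ S)
    (S : Finset V) (St : ℕ → Finset V) (hSt : ∀ t, St t = (S ∩ B t) ∪ A t) :
    ∀ t, φ (St t) ≤ φ (St (t+1)) ∧ (φ (St t) = φ (St (t+1)) ↔ St t = St (t+1)) := by
  intro t
  obtain ⟨hAA, hAB1, hBB⟩ := hchain t
  have hAtBt : A t ⊆ B t := hAA.trans (hAB1.trans hBB)
  -- subset facts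
  have hLX : A t ⊆ St t := by rw [hSt]; exact Finset.subset_union_right
  have hXU : St t ⊆ B t := by
    rw [hSt]; exact Finset.union_subset Finset.inter_subset_right hAtBt
  have hLY : A t ⊆ St (t+1) := by
    rw [hSt]; exact hAA.trans Finset.subset_union_right
  have hYU : St (t+1) ⊆ B t := by
    rw [hSt]
    exact Finset.union_subset (Finset.inter_subset_right.trans hBB) (hAB1.trans hBB)
  -- gain condition for added elements
  have hp : ∀ v ∈ St (t+1) \ St t, ∀ Z, A t ⊆ Z → Z ⊆ B t → v ∉ Z →
      φ Z < φ (insert v Z) := by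
    intro v hv Z hAZ hZB hvZ
    obtain ⟨hv1, hv2⟩ := Finset.mem_sdiff.mp hv
    rw [hSt] at hv1 hv2
    have hvnAt : v ∉ A t := fun h => hv2 (Finset.mem_union_right _ h)
    have hvA1 : v ∈ A (t+1) := by
      rcases Finset.mem_union.mp hv1 with h | h
      · exfalso
        obtain ⟨hS, hB1⟩ := Finset.mem_inter.mp h
        exact hv2 (Finset.mem_union_left _ (Finset.mem_inter.mpr ⟨hS, hBB hB1⟩))
      · exact h
    have hcond := (hA t v).mp hvA1
    rcases hcond with h | ⟨hvB, _, hgain⟩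
    · exact absurd h hvnAt
    -- submodularity bounds
    have hvBe : v ∉ B t \ {v} := by simp
    have hZsub : Z ⊆ B t \ {v} := fun a ha =>
      Finset.mem_sdiff.mpr ⟨hZB ha, by simp; rintro rfl; exact hvZ ha⟩
    have hβ1 := hβ Z (B t \ {v}) v hZsub hvBe
    have hrw : insert v (B t \ {v}) = B t := by
      rw [← Finset.erase_eq, Finset.insert_erase hvB]
    rw [hrw] at hβ1
    have hγ1 := hγ (A t) Z v hAZ hvZ
    rw [hφ, hφ]
    linarith
  -- loss condition for removed elements
  have hm : ∀ v ∈ St t \ St (t+1), ∀ Z, A t ⊆ Z → Z ⊆ B t → v ∉ Z →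
      φ (insert v Z) < φ Z := by
    intro v hv Z hAZ hZB hvZ
    obtain ⟨hv1, hv2⟩ := Finset.mem_sdiff.mp hv
    rw [hSt] at hv1 hv2
    have hvnA1 : v ∉ A (t+1) := fun h => hv2 (Finset.mem_union_right _ h)
    have hvnAt : v ∉ A t := fun h => hvnA1 (hAA h)
    have hvSB : v ∈ S ∩ B t := by
      rcases Finset.mem_union.mp hv1 with h | h
      · exact h
      · exact absurd h hvnAt
    obtain ⟨hvS, hvB⟩ := Finset.mem_inter.mp hvSB
    have hvnB1 : v ∉ B (t+1) := fun h =>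
      hv2 (Finset.mem_union_left _ (Finset.mem_inter.mpr ⟨hvS, h⟩))
    have hcond : β (insert v (A t)) - β (A t) - (γ (B t) - γ (B t \ {v})) < 0 := by
      by_contra hcon
      exact hvnB1 ((hB t v).mpr ⟨hvB, by
        rintro ⟨_, _, hlt⟩; exact hcon hlt⟩)
    have hvBe : v ∉ B t \ {v} := by simp
    have hZsub : Z ⊆ B t \ {v} := fun a ha =>
      Finset.mem_sdiff.mpr ⟨hZB ha, by simp; rintro rfl; exact hvZ ha⟩
    have hβ1 := hβ (A t) Z v hAZ hvZ
    have hγ1 := hγ Z (B t \ {v}) v hZsub hvBe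
    have hrw : insert v (B t \ {v}) = B t := by
      rw [← Finset.erase_eq, Finset.insert_erase hvB]
    rw [hrw] at hγ1
    rw [hφ, hφ]
    linarith
  have key := exchange_aux φ (A t) (B t)
    ((St t \ St (t+1)).card + (St (t+1) \ St t).card)
    (St t) (St (t+1)) le_rfl hLX hXU hLY hYU hp hm
  rcases key with h | h
  · exact ⟨le_of_eq (congrArg φ h), ⟨fun _ => h, fun _ => congrArg φ h⟩⟩
  · refine ⟨le_of_lt h, ⟨fun heq => absurd heq (ne_of_lt h), fun heq => congrArg φ heq⟩⟩
end

section
/- Let A*, B* be the fixed point of the iterative pruning procedure (A_0 = ∅, B_0 = V, with the update rules adding v to A when β(v | B_t \ {v}) − γ(v | A_t) > 0 and removing v from B when β(v | A_t) − γ(v | B_t \ {v}) < 0, iterated until convergence). Then for any S ⊆ V with not A* ⊆ S ⊆ B*, we have φ(S) < φ((S ∩ B*) ∪ A*), where φ = β − γ. -/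
open Finset

section Aux

variable {V : Type*} [Fintype V] [DecidableEq V]

/-- Adding an element that satisfies the add condition strictly increases φ. -/
lemma prune_add_step {β γ : Finset V → ℝ} (hβ : Submodular β) (hγ : Submodular γ)
    {At Bt X : Finset V} {v : V} (hvB : v ∈ Bt)
    (hcond : β Bt - β (Bt \ {v}) - (γ (insert v At) - γ At) > 0)
    (hl : At ⊆ X) (hu : X ⊆ Bt) (hvX : v ∉ X) :
    β X - γ X < β (insert v X) - γ (insert v X) := by
  have hXsub : X ⊆ Bt \ {v} := by
    intro x hx
    simp only [Finset.mem_sdiff, Finset.mem_singleton]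
    exact ⟨hu hx, fun h => hvX (h ▸ hx)⟩
  have hvBt : v ∉ Bt \ {v} := by simp
  have h1 := hβ X (Bt \ {v}) v hXsub hvBt
  have h2 := hγ At X v hl hvX
  have hins : insert v (Bt \ {v}) = Bt := by
    rw [Finset.sdiff_singleton_eq_erase, Finset.insert_erase hvB]
  rw [hins] at h1
  linarith

/-- Removing an element that satisfies the remove condition strictly increases φ. -/
lemma prune_remove_step {β γ : Finset V → ℝ} (hβ : Submodular β) (hγ : Submodular γ)
    {At Bt X : Finset V} {v : V} (hvB : v ∈ Bt)
    (hcond : β (insert v At) - β At - (γ Bt - γ (Bt \ {v})) < 0)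
    (hl : At ⊆ X) (hu : X ⊆ Bt) (hvX : v ∉ X) :
    β (insert v X) - γ (insert v X) < β X - γ X := by
  have hXsub : X ⊆ Bt \ {v} := by
    intro x hx
    simp only [Finset.mem_sdiff, Finset.mem_singleton]
    exact ⟨hu hx, fun h => hvX (h ▸ hx)⟩
  have hvBt : v ∉ Bt \ {v} := by simp
  have h1 := hβ At X v hl hvX
  have h2 := hγ X (Bt \ {v}) v hXsub hvBt
  have hins : insert v (Bt \ {v}) = Bt := by
    rw [Finset.sdiff_singleton_eq_erase, Finset.insert_erase hvB]
  rw [hins] at h2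
  linarith

variable {β γ : Finset V → ℝ} {A B : ℕ → Finset V}

lemma prune_AsubB (hβ : Submodular β) (hγ : Submodular γ)
    (hA0 : A 0 = ∅) (hB0 : B 0 = Finset.univ)
    (hA : ∀ t v, v ∈ A (t+1) ↔ v ∈ A t ∨ (v ∈ B t ∧ v ∉ A t ∧
      β (B t) - β (B t \ {v}) - (γ (insert v (A t)) - γ (A t)) > 0))
    (hB : ∀ t v, v ∈ B (t+1) ↔ v ∈ B t ∧ ¬ (v ∈ B t ∧ v ∉ A t ∧
      β (insert v (A t)) - β (A t) - (γ (B t) - γ (B t \ {v})) < 0)) :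
    ∀ t, A t ⊆ B t := by
  intro t
  induction t with
  | zero => rw [hA0, hB0]; exact Finset.empty_subset _
  | succ t ih =>
    intro v hv
    rw [hB]
    rcases (hA t v).1 hv with hvA | ⟨hvB, hvA, hc⟩
    · exact ⟨ih hvA, fun h => h.2.1 hvA⟩
    · refine ⟨hvB, ?_⟩
      rintro ⟨-, -, hc2⟩
      have hsub : A t ⊆ B t \ {v} := by
        intro x hx
        simp only [Finset.mem_sdiff, Finset.mem_singleton]
        exact ⟨ih hx, fun h => hvA (h ▸ hx)⟩
      have hvBt : v ∉ B t \ {v} := by simp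
      have h1 := hβ (A t) (B t \ {v}) v hsub hvBt
      have h2 := hγ (A t) (B t \ {v}) v hsub hvBt
      have hins : insert v (B t \ {v}) = B t := by
        rw [Finset.sdiff_singleton_eq_erase, Finset.insert_erase hvB]
      rw [hins] at h1 h2
      linarith

/-- One time step of pruning: telescoping over all events at time t. -/
lemma prune_step (hβ : Submodular β) (hγ : Submodular γ)
    (hA0 : A 0 = ∅) (hB0 : B 0 = Finset.univ)
    (hA : ∀ t v, v ∈ A (t+1) ↔ v ∈ A t ∨ (v ∈ B t ∧ v ∉ A t ∧
      β (B t) - β (B t \ {v}) - (γ (insert v (A t)) - γ (A t)) > 0))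
    (hB : ∀ t v, v ∈ B (t+1) ↔ v ∈ B t ∧ ¬ (v ∈ B t ∧ v ∉ A t ∧
      β (insert v (A t)) - β (A t) - (γ (B t) - γ (B t \ {v})) < 0))
    (t : ℕ) :
    ∀ n (X : Finset V), ((A (t+1) \ X) ∪ (X \ B (t+1))).card ≤ n →
      A t ⊆ X → X ⊆ B t →
      (β X - γ X ≤ β ((X ∩ B (t+1)) ∪ A (t+1)) - γ ((X ∩ B (t+1)) ∪ A (t+1))) ∧
      (X ≠ (X ∩ B (t+1)) ∪ A (t+1) →
        β X - γ X < β ((X ∩ B (t+1)) ∪ A (t+1)) - γ ((X ∩ B (t+1)) ∪ A (t+1))) := by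
  have hAB := prune_AsubB hβ hγ hA0 hB0 hA hB
  intro n
  induction n with
  | zero =>
    intro X hcard hl hu
    have hD : (A (t+1) \ X) ∪ (X \ B (t+1)) = ∅ := Finset.card_eq_zero.1 (Nat.le_zero.1 hcard)
    have h1 : A (t+1) ⊆ X := by
      intro x hx
      by_contra hxX
      have : x ∈ (A (t+1) \ X) ∪ (X \ B (t+1)) :=
        Finset.mem_union_left _ (Finset.mem_sdiff.2 ⟨hx, hxX⟩)
      simp [hD] at this
    have h2 : X ⊆ B (t+1) := by
      intro x hx
      by_contra hxB
      have : x ∈ (A (t+1) \ X) ∪ (X \ B (t+1)) :=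
        Finset.mem_union_right _ (Finset.mem_sdiff.2 ⟨hx, hxB⟩)
      simp [hD] at this
    have heq : (X ∩ B (t+1)) ∪ A (t+1) = X := by
      rw [Finset.inter_eq_left.2 h2, Finset.union_eq_left.2 h1]
    rw [heq]
    exact ⟨le_refl _, fun h => absurd rfl h⟩
  | succ n ih =>
    intro X hcard hl hu
    by_cases hD : (A (t+1) \ X) ∪ (X \ B (t+1)) = ∅
    · -- same as base case
      have h1 : A (t+1) ⊆ X := by
        intro x hx
        by_contra hxX
        have : x ∈ (A (t+1) \ X) ∪ (X \ B (t+1)) :=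
          Finset.mem_union_left _ (Finset.mem_sdiff.2 ⟨hx, hxX⟩)
        simp [hD] at this
      have h2 : X ⊆ B (t+1) := by
        intro x hx
        by_contra hxB
        have : x ∈ (A (t+1) \ X) ∪ (X \ B (t+1)) :=
          Finset.mem_union_right _ (Finset.mem_sdiff.2 ⟨hx, hxB⟩)
        simp [hD] at this
      have heq : (X ∩ B (t+1)) ∪ A (t+1) = X := by
        rw [Finset.inter_eq_left.2 h2, Finset.union_eq_left.2 h1]
      rw [heq]
      exact ⟨le_refl _, fun h => absurd rfl h⟩
    · obtain ⟨v, hv⟩ := Finset.nonempty_of_ne_empty hD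
      rcases Finset.mem_union.1 hv with hv1 | hv2
      · -- v ∈ A (t+1) \ X : add v
        obtain ⟨hvA1, hvX⟩ := Finset.mem_sdiff.1 hv1
        have hvAt : v ∉ A t := fun h => hvX (hl h)
        rcases (hA t v).1 hvA1 with h | ⟨hvB, -, hc⟩
        · exact absurd h hvAt
        have hstep : β X - γ X < β (insert v X) - γ (insert v X) :=
          prune_add_step hβ hγ hvB hc hl hu hvX
        have hvB1 : v ∈ B (t+1) := hAB (t+1) hvA1
        have hl' : A t ⊆ insert v X := hl.trans (Finset.subset_insert _ _)
        have hu' : insert v X ⊆ B t := Finset.insert_subset hvB hu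
        have hDsub : (A (t+1) \ insert v X) ∪ (insert v X \ B (t+1)) ⊆
            ((A (t+1) \ X) ∪ (X \ B (t+1))).erase v := by
          intro x hx
          rw [Finset.mem_erase]
          rcases Finset.mem_union.1 hx with hx1 | hx2
          · obtain ⟨ha, hb⟩ := Finset.mem_sdiff.1 hx1
            have hxv : x ≠ v := fun h => hb (h ▸ Finset.mem_insert_self v X)
            exact ⟨hxv, Finset.mem_union_left _ (Finset.mem_sdiff.2
              ⟨ha, fun h => hb (Finset.mem_insert_of_mem h)⟩)⟩
          · obtain ⟨ha, hb⟩ := Finset.mem_sdiff.1 hx2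
            have hxv : x ≠ v := fun h => hb (h ▸ hvB1)
            rcases Finset.mem_insert.1 ha with h | h
            · exact absurd h hxv
            · exact ⟨hxv, Finset.mem_union_right _ (Finset.mem_sdiff.2 ⟨h, hb⟩)⟩
        have hcard' : ((A (t+1) \ insert v X) ∪ (insert v X \ B (t+1))).card ≤ n := by
          have := Finset.card_le_card hDsub
          have h2 := Finset.card_erase_of_mem hv
          omega
        have heq : (insert v X ∩ B (t+1)) ∪ A (t+1) = (X ∩ B (t+1)) ∪ A (t+1) := by
          ext x
          simp only [Finset.mem_union, Finset.mem_inter, Finset.mem_insert]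
          constructor
          · rintro (⟨rfl | hx, hb⟩ | ha)
            · exact Or.inr hvA1
            · exact Or.inl ⟨hx, hb⟩
            · exact Or.inr ha
          · rintro (⟨hx, hb⟩ | ha)
            · exact Or.inl ⟨Or.inr hx, hb⟩
            · exact Or.inr ha
        have hrest := ih (insert v X) hcard' hl' hu'
        rw [heq] at hrest
        exact ⟨le_of_lt (lt_of_lt_of_le hstep hrest.1), fun _ => lt_of_lt_of_le hstep hrest.1⟩
      · -- v ∈ X \ B (t+1) : remove v
        obtain ⟨hvX, hvB1⟩ := Finset.mem_sdiff.1 hv2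
        have hvB : v ∈ B t := hu hvX
        have hC : v ∉ A t ∧
            β (insert v (A t)) - β (A t) - (γ (B t) - γ (B t \ {v})) < 0 := by
          by_contra hC
          exact hvB1 ((hB t v).2 ⟨hvB, fun h => hC h.2⟩)
        obtain ⟨hvAt, hc⟩ := hC
        have hvA1 : v ∉ A (t+1) := fun h => hvB1 (hAB (t+1) h)
        set X' := X \ {v} with hX'
        have hvX' : v ∉ X' := by simp [hX']
        have hins : insert v X' = X := by
          rw [hX', Finset.sdiff_singleton_eq_erase, Finset.insert_erase hvX]
        have hl' : A t ⊆ X' := by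
          intro x hx
          simp only [hX', Finset.mem_sdiff, Finset.mem_singleton]
          exact ⟨hl hx, fun h => hvAt (h ▸ hx)⟩
        have hu' : X' ⊆ B t := (Finset.sdiff_subset).trans hu
        have hstep : β X - γ X < β X' - γ X' := by
          have := prune_remove_step hβ hγ hvB hc hl' hu' hvX'
          rwa [hins] at this
        have hDsub : (A (t+1) \ X') ∪ (X' \ B (t+1)) ⊆
            ((A (t+1) \ X) ∪ (X \ B (t+1))).erase v := by
          intro x hx
          rw [Finset.mem_erase]
          rcases Finset.mem_union.1 hx with hx1 | hx2
          · obtain ⟨ha, hb⟩ := Finset.mem_sdiff.1 hx1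
            have hxv : x ≠ v := fun h => hvA1 (h ▸ ha)
            refine ⟨hxv, Finset.mem_union_left _ (Finset.mem_sdiff.2 ⟨ha, fun h => hb ?_⟩)⟩
            simp only [hX', Finset.mem_sdiff, Finset.mem_singleton]
            exact ⟨h, hxv⟩
          · obtain ⟨ha, hb⟩ := Finset.mem_sdiff.1 hx2
            have hxv : x ≠ v := by
              simp only [hX', Finset.mem_sdiff, Finset.mem_singleton] at ha
              exact ha.2
            have hxX : x ∈ X := by
              simp only [hX', Finset.mem_sdiff] at ha
              exact ha.1
            exact ⟨hxv, Finset.mem_union_right _ (Finset.mem_sdiff.2 ⟨hxX, hb⟩)⟩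
        have hcard' : ((A (t+1) \ X') ∪ (X' \ B (t+1))).card ≤ n := by
          have := Finset.card_le_card hDsub
          have h2 := Finset.card_erase_of_mem hv
          omega
        have heq : (X' ∩ B (t+1)) ∪ A (t+1) = (X ∩ B (t+1)) ∪ A (t+1) := by
          ext x
          simp only [Finset.mem_union, Finset.mem_inter, hX', Finset.mem_sdiff,
            Finset.mem_singleton]
          constructor
          · rintro (⟨⟨hx, -⟩, hb⟩ | ha)
            · exact Or.inl ⟨hx, hb⟩
            · exact Or.inr ha
          · rintro (⟨hx, hb⟩ | ha)
            · exact Or.inl ⟨⟨hx, fun h => hvB1 (h ▸ hb)⟩, hb⟩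
            · exact Or.inr ha
        have hrest := ih X' hcard' hl' hu'
        rw [heq] at hrest
        exact ⟨le_of_lt (lt_of_lt_of_le hstep hrest.1), fun _ => lt_of_lt_of_le hstep hrest.1⟩

end Aux

theorem pruning_fixed_point_improves {V : Type*} [Fintype V] [DecidableEq V]
    (β γ : Finset V → ℝ)
    (hβ : Submodular β) (hγ : Submodular γ)
    (A B : ℕ → Finset V)
    (hA0 : A 0 = ∅) (hB0 : B 0 = Finset.univ)
    (hA : ∀ t v, v ∈ A (t+1) ↔ v ∈ A t ∨ (v ∈ B t ∧ v ∉ A t ∧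
      β (B t) - β (B t \ {v}) - (γ (insert v (A t)) - γ (A t)) > 0))
    (hB : ∀ t v, v ∈ B (t+1) ↔ v ∈ B t ∧ ¬ (v ∈ B t ∧ v ∉ A t ∧
      β (insert v (A t)) - β (A t) - (γ (B t) - γ (B t \ {v})) < 0))
    (Astar Bstar : Finset V) (T : ℕ)
    (hAconv : A T = Astar) (hBconv : B T = Bstar)
    (hAfix : A (T+1) = Astar) (hBfix : B (T+1) = Bstar)
    (φ : Finset V → ℝ) (hφ : ∀ S, φ S = β S - γ S) :
    ∀ S : Finset V, ¬ (Astar ⊆ S ∧ S ⊆ Bstar) →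
      φ S < φ ((S ∩ Bstar) ∪ Astar) := by
  have hAB := prune_AsubB hβ hγ hA0 hB0 hA hB
  have main : ∀ t, ∀ S : Finset V, ¬ (A t ⊆ S ∧ S ⊆ B t) →
      β S - γ S < β ((S ∩ B t) ∪ A t) - γ ((S ∩ B t) ∪ A t) := by
    intro t
    induction t with
    | zero =>
      intro S hS
      exact absurd ⟨by rw [hA0]; exact Finset.empty_subset _,
        by rw [hB0]; exact Finset.subset_univ _⟩ hS
    | succ t ih =>
      intro S hS
      by_cases h : A t ⊆ S ∧ S ⊆ B t
      · have hne : S ≠ (S ∩ B (t+1)) ∪ A (t+1) := by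
          intro heq
          apply hS
          constructor
          · rw [heq]; exact Finset.subset_union_right
          · rw [heq]
            exact Finset.union_subset Finset.inter_subset_right (hAB (t+1))
        exact (prune_step hβ hγ hA0 hB0 hA hB t
          ((A (t+1) \ S) ∪ (S \ B (t+1))).card S le_rfl h.1 h.2).2 hne
      · have h1 := ih S h
        set S' := (S ∩ B t) ∪ A t with hS'
        have hl : A t ⊆ S' := Finset.subset_union_right
        have hu : S' ⊆ B t := Finset.union_subset Finset.inter_subset_right (hAB t)
        have h2 := (prune_step hβ hγ hA0 hB0 hA hB t
          ((A (t+1) \ S') ∪ (S' \ B (t+1))).card S' le_rfl hl hu).1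
        have hBmono : B (t+1) ⊆ B t := fun x hx => ((hB t x).1 hx).1
        have hAmono : A t ⊆ A (t+1) := fun x hx => (hA t x).2 (Or.inl hx)
        have heq : (S' ∩ B (t+1)) ∪ A (t+1) = (S ∩ B (t+1)) ∪ A (t+1) := by
          ext x
          simp only [hS', Finset.mem_union, Finset.mem_inter]
          constructor
          · rintro (⟨⟨hx, -⟩ | hx, hb⟩ | ha)
            · exact Or.inl ⟨hx, hb⟩
            · exact Or.inr (hAmono hx)
            · exact Or.inr ha
          · rintro (⟨hx, hb⟩ | ha)
            · exact Or.inl ⟨Or.inl ⟨hx, hBmono hb⟩, hb⟩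
            · exact Or.inr ha
        rw [heq] at h2
        linarith
  intro S hS
  rw [hφ, hφ]
  have := main T S (by rw [hAconv, hBconv]; exact hS)
  rwa [hAconv, hBconv] at this
end

section
/- Let A*, B* be the converged sets of the iterative pruning procedure for φ = β − γ with β, γ submodular on subsets of a finite set V. Then every maximizer S* of φ over 2^V satisfies A* ⊆ S* ⊆ B*. -/
open Finset

theorem maximizers_in_lattice {V : Type*} [Fintype V] [DecidableEq V]
    (β γ : Finset V → ℝ)
    (hβ : Submodular β) (hγ : Submodular γ)
    (A B : ℕ → Finset V)
    (hA0 : A 0 = ∅) (hB0 : B 0 = Finset.univ)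
    (hA : ∀ t v, v ∈ A (t+1) ↔ v ∈ A t ∨ (v ∈ B t ∧ v ∉ A t ∧
      β (B t) - β (B t \ {v}) - (γ (insert v (A t)) - γ (A t)) > 0))
    (hB : ∀ t v, v ∈ B (t+1) ↔ v ∈ B t ∧ ¬ (v ∈ B t ∧ v ∉ A t ∧
      β (insert v (A t)) - β (A t) - (γ (B t) - γ (B t \ {v})) < 0))
    (Astar Bstar : Finset V) (T : ℕ)
    (hAconv : A T = Astar) (hBconv : B T = Bstar)
    (hAfix : A (T+1) = Astar) (hBfix : B (T+1) = Bstar)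
    (φ : Finset V → ℝ) (hφ : ∀ S, φ S = β S - γ S) :
    ∀ Sstar : Finset V, (∀ S : Finset V, φ S ≤ φ Sstar) →
      Astar ⊆ Sstar ∧ Sstar ⊆ Bstar := by
  intro Sstar hmax
  have key : ∀ t, A t ⊆ Sstar ∧ Sstar ⊆ B t := by
    intro t
    induction t with
    | zero => constructor <;> simp [hA0, hB0]
    | succ t ih =>
      obtain ⟨ihA, ihB⟩ := ih
      constructor
      · intro v hv
        rw [hA t v] at hv
        rcases hv with hv | ⟨hvB, hvA, hpos⟩
        · exact ihA hv
        by_contra hvS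
        -- Sstar ⊆ B t \ {v}
        have hsub : Sstar ⊆ B t \ {v} := by
          intro x hx
          simp only [mem_sdiff, mem_singleton]
          exact ⟨ihB hx, fun h => hvS (h ▸ hx)⟩
        have hvnot : v ∉ B t \ {v} := by simp
        have h1 : β (insert v (B t \ {v})) - β (B t \ {v}) ≤ β (insert v Sstar) - β Sstar :=
          hβ Sstar (B t \ {v}) v hsub hvnot
        have hins : insert v (B t \ {v}) = B t := by
          rw [← Finset.erase_eq]; exact Finset.insert_erase hvB
        rw [hins] at h1
        have h2 : γ (insert v Sstar) - γ Sstar ≤ γ (insert v (A t)) - γ (A t) :=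
          hγ (A t) Sstar v ihA hvS
        have := hmax (insert v Sstar)
        rw [hφ, hφ] at this
        linarith
      · intro v hv
        rw [hB t v]
        refine ⟨ihB hv, ?_⟩
        rintro ⟨hvB, hvA, hneg⟩
        have hvS' : v ∉ Sstar \ {v} := by simp
        have hsubA : A t ⊆ Sstar \ {v} := by
          intro x hx
          simp only [mem_sdiff, mem_singleton]
          exact ⟨ihA hx, fun h => hvA (h ▸ hx)⟩
        have h1 : β (insert v (Sstar \ {v})) - β (Sstar \ {v}) ≤ β (insert v (A t)) - β (A t) :=
          hβ (A t) (Sstar \ {v}) v hsubA hvS'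
        have hins : insert v (Sstar \ {v}) = Sstar := by
          rw [← Finset.erase_eq]; exact Finset.insert_erase hv
        rw [hins] at h1
        have hsubB : Sstar \ {v} ⊆ B t \ {v} := sdiff_subset_sdiff ihB (le_refl _)
        have hvnot : v ∉ B t \ {v} := by simp
        have h2 : γ (insert v (B t \ {v})) - γ (B t \ {v}) ≤
            γ (insert v (Sstar \ {v})) - γ (Sstar \ {v}) :=
          hγ (Sstar \ {v}) (B t \ {v}) v hsubB hvnot
        have hinsB : insert v (B t \ {v}) = B t := by
          rw [← Finset.erase_eq]; exact Finset.insert_erase hvB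
        rw [hinsB, hins] at h2
        have := hmax (Sstar \ {v})
        rw [hφ, hφ] at this
        linarith
  obtain ⟨h1, h2⟩ := key T
  rw [hAconv] at h1; rw [hBconv] at h2
  exact ⟨h1, h2⟩
end

section
/- Let f : 2^V → ℝ be submodular and X, Y ⊆ V. Then m_X^1(Y) := f(X) − Σ_{v ∈ X \ Y} (f(V) − f(V \ {v})) + Σ_{v ∈ Y \ X} (f(X ∪ {v}) − f(X)) satisfies m_X^1(Y) ≥ f(Y), with equality when Y = X. -/
open Finset

lemma submod_union_bound {V : Type*} [DecidableEq V] (f : Finset V → ℝ)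
    (hf : Submodular f) (S : Finset V) :
    ∀ A : Finset V, Disjoint A S →
      f (S ∪ A) ≤ f S + ∑ v ∈ A, (f (insert v S) - f S) := by
  intro A
  induction A using Finset.induction_on with
  | empty => simp
  | @insert a A' ha ih =>
    intro hdisj
    have haS : a ∉ S := by
      have := Finset.disjoint_left.mp hdisj (Finset.mem_insert_self a A')
      exact this
    have hdisj' : Disjoint A' S := Finset.disjoint_of_subset_left (Finset.subset_insert a A') hdisj
    have haSA : a ∉ S ∪ A' := by simp [haS, ha]
    have hsub : f (insert a (S ∪ A')) - f (S ∪ A') ≤ f (insert a S) - f S :=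
      hf S (S ∪ A') a Finset.subset_union_left haSA
    have heq : S ∪ insert a A' = insert a (S ∪ A') := by
      ext x; simp [or_comm, or_assoc, or_left_comm]
    rw [heq, Finset.sum_insert ha]
    have := ih hdisj'
    linarith

lemma submod_remove_bound {V : Type*} [Fintype V] [DecidableEq V] (f : Finset V → ℝ)
    (hf : Submodular f) :
    ∀ B T : Finset V, B ⊆ T →
      f (T \ B) + ∑ v ∈ B, (f Finset.univ - f (Finset.univ \ {v})) ≤ f T := by
  intro B
  induction B using Finset.induction_on with
  | empty => simp
  | @insert b B' hb ih =>
    intro T hBT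
    have hbT : b ∈ T := hBT (Finset.mem_insert_self b B')
    have hB'T : B' ⊆ T \ {b} := by
      intro x hx
      simp only [Finset.mem_sdiff, Finset.mem_singleton]
      exact ⟨hBT (Finset.mem_insert_of_mem hx), fun h => hb (h ▸ hx)⟩
    have key : f Finset.univ - f (Finset.univ \ {b}) ≤ f T - f (T \ {b}) := by
      have h1 : T \ {b} ⊆ Finset.univ \ {b} := by
        intro x hx; simp only [Finset.mem_sdiff] at hx ⊢
        exact ⟨Finset.mem_univ x, hx.2⟩
      have h2 : b ∉ Finset.univ \ {b} := by simp
      have := hf (T \ {b}) (Finset.univ \ {b}) b h1 h2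
      have e1 : insert b (Finset.univ \ {b}) = Finset.univ := by
        ext x; by_cases hx : x = b <;> simp [hx]
      have e2 : insert b (T \ {b}) = T := by
        ext x; by_cases hx : x = b <;> simp [hx, hbT]
      rw [e1, e2] at this
      exact this
    have ihh := ih (T \ {b}) hB'T
    have e3 : (T \ {b}) \ B' = T \ insert b B' := by
      ext x; simp [and_assoc, and_comm, and_left_comm, not_or]
    rw [e3] at ihh
    rw [Finset.sum_insert hb]
    linarith

theorem modular_upper_bound_one {V : Type*} [Fintype V] [DecidableEq V]
    (f : Finset V → ℝ) (hf : Submodular f) (X Y : Finset V) :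
    f Y ≤ f X - ∑ v ∈ X \ Y, (f Finset.univ - f (Finset.univ \ {v}))
            + ∑ v ∈ Y \ X, (f (insert v X) - f X) ∧
    (Y = X → f Y = f X - ∑ v ∈ X \ Y, (f Finset.univ - f (Finset.univ \ {v}))
            + ∑ v ∈ Y \ X, (f (insert v X) - f X)) := by
  constructor
  · have h1 : f (X ∪ (Y \ X)) ≤ f X + ∑ v ∈ Y \ X, (f (insert v X) - f X) :=
      submod_union_bound f hf X (Y \ X) (Finset.sdiff_disjoint)
    have e1 : X ∪ (Y \ X) = X ∪ Y := Finset.union_sdiff_self_eq_union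
    rw [e1] at h1
    have h2 : f ((X ∪ Y) \ (X \ Y)) + ∑ v ∈ X \ Y, (f Finset.univ - f (Finset.univ \ {v}))
        ≤ f (X ∪ Y) := by
      apply submod_remove_bound f hf
      intro x hx
      simp only [Finset.mem_sdiff] at hx
      exact Finset.mem_union_left Y hx.1
    have e2 : (X ∪ Y) \ (X \ Y) = Y := by
      ext x; simp only [Finset.mem_sdiff, Finset.mem_union]
      tauto
    rw [e2] at h2
    linarith
  · intro h; subst h; simp
end

section
/- Let f : 2^V → ℝ be submodular and X, Y ⊆ V. Then m_X^2(Y) := f(X) − Σ_{v ∈ X \ Y} (f(X) − f(X \ {v})) + Σ_{v ∈ Y \ X} f({v}) − |Y \ X| · f(∅) satisfies m_X^2(Y) ≥ f(Y), with equality when Y = X. -/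
open Finset

lemma lemA {V : Type*} [DecidableEq V] (f : Finset V → ℝ) (hf : Submodular f)
    (X : Finset V) : ∀ S : Finset V, S ⊆ X →
    ∑ v ∈ S, (f X - f (X \ {v})) ≤ f X - f (X \ S) := by
  intro S
  induction S using Finset.induction_on with
  | empty => simp
  | @insert a S' ha ih =>
    intro h
    have haX : a ∈ X := h (mem_insert_self a S')
    have hS'X : S' ⊆ X := (subset_insert a S').trans h
    rw [sum_insert ha]
    have key : f X - f (X \ {a}) ≤ f (X \ S') - f ((X \ S') \ {a}) := by
      have h1 : (X \ S') \ {a} ⊆ X \ {a} :=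
        sdiff_subset_sdiff sdiff_subset (le_refl _)
      have h2 : a ∉ X \ {a} := by simp
      have hsub := hf ((X \ S') \ {a}) (X \ {a}) a h1 h2
      have e1 : insert a (X \ {a}) = X := by
        ext x
        simp only [mem_insert, mem_sdiff, mem_singleton]
        constructor
        · rintro (rfl | ⟨hx, _⟩) <;> [exact haX; exact hx]
        · intro hx; by_cases hxa : x = a
          · exact Or.inl hxa
          · exact Or.inr ⟨hx, hxa⟩
      have e2 : insert a ((X \ S') \ {a}) = X \ S' := by
        ext x
        simp only [mem_insert, mem_sdiff, mem_singleton]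
        constructor
        · rintro (rfl | ⟨⟨hx, hs⟩, _⟩)
          · exact ⟨haX, ha⟩
          · exact ⟨hx, hs⟩
        · rintro ⟨hx, hs⟩
          by_cases hxa : x = a
          · exact Or.inl hxa
          · exact Or.inr ⟨⟨hx, hs⟩, hxa⟩
      rw [e1, e2] at hsub
      exact hsub
    have e3 : (X \ S') \ {a} = X \ insert a S' := by
      ext x
      simp only [mem_sdiff, mem_singleton, mem_insert]
      tauto
    have ihS := ih hS'X
    rw [e3] at key
    linarith

lemma lemB {V : Type*} [DecidableEq V] (f : Finset V → ℝ) (hf : Submodular f)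
    (T : Finset V) : ∀ S : Finset V, Disjoint S T →
    f (T ∪ S) ≤ f T + ∑ v ∈ S, (f {v} - f ∅) := by
  intro S
  induction S using Finset.induction_on with
  | empty => simp
  | @insert a S' ha ih =>
    intro hd
    have hd' : Disjoint S' T := Finset.disjoint_of_subset_left (subset_insert a S') hd
    have haT : a ∉ T ∪ S' := by
      intro hmem
      rcases mem_union.mp hmem with h1 | h1
      · exact (Finset.disjoint_left.mp hd (mem_insert_self a S')) h1
      · exact ha h1
    have hsub := hf ∅ (T ∪ S') a (empty_subset _) haT
    rw [insert_empty_eq] at hsub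
    rw [union_insert, sum_insert ha]
    have := ih hd'
    linarith

theorem modular_upper_bound_two {V : Type*} [Fintype V] [DecidableEq V]
    (f : Finset V → ℝ) (hf : Submodular f) (X Y : Finset V) :
    f Y ≤ f X - ∑ v ∈ X \ Y, (f X - f (X \ {v}))
            + ∑ v ∈ Y \ X, f {v} - (Y \ X).card * f ∅ ∧
    (Y = X → f Y = f X - ∑ v ∈ X \ Y, (f X - f (X \ {v}))
            + ∑ v ∈ Y \ X, f {v} - (Y \ X).card * f ∅) := by
  constructor
  · have hA := lemA f hf X (X \ Y) sdiff_subset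
    have hB := lemB f hf (X ∩ Y) (Y \ X)
      (by rw [Finset.disjoint_left]; intro x hx hmem
          exact (mem_sdiff.mp hx).2 (mem_inter.mp hmem).1)
    have e1 : X \ (X \ Y) = X ∩ Y := sdiff_sdiff_self_left X Y
    have e2 : (X ∩ Y) ∪ (Y \ X) = Y := by
      ext x
      simp only [mem_union, mem_inter, mem_sdiff]
      tauto
    rw [e1] at hA
    rw [e2] at hB
    have e3 : ∑ v ∈ Y \ X, (f {v} - f ∅)
        = ∑ v ∈ Y \ X, f {v} - (Y \ X).card * f ∅ := by
      rw [Finset.sum_sub_distrib, Finset.sum_const, nsmul_eq_mul]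
    rw [e3] at hB
    linarith
  · intro h
    subst h
    simp
end

section
/- Let f : 2^V → ℝ be submodular, A ⊆ X ⊆ B ⊆ V, and A ⊆ Y ⊆ B. Define m_X^4(Y) := f(X) − Σ_{v ∈ X \ Y} (f(X) − f(X \ {v})) + Σ_{v ∈ Y \ X} (f(A ∪ {v}) − f(A)). Then f(Y) ≤ m_X^4(Y) ≤ m_X^2(Y), where m_X^2(Y) := f(X) − Σ_{v ∈ X \ Y} (f(X) − f(X \ {v})) + Σ_{v ∈ Y \ X} (f({v}) − f(∅)); moreover m_X^4(X) = f(X). -/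
open Finset

lemma remove_bound {V : Type*} [DecidableEq V] (f : Finset V → ℝ) (hf : Submodular f)
    (X : Finset V) : ∀ D : Finset V, D ⊆ X →
    f (X \ D) ≤ f X - ∑ v ∈ D, (f X - f (X \ {v})) := by
  intro D
  induction D using Finset.induction with
  | empty => simp
  | @insert a D ha ih =>
    intro hsub
    have haX : a ∈ X := hsub (Finset.mem_insert_self a D)
    have hDX : D ⊆ X := (Finset.insert_subset_iff.mp hsub).2
    have hS : X \ insert a D ⊆ X \ {a} := by
      apply Finset.sdiff_subset_sdiff (le_refl X)
      simp
    have hna : a ∉ X \ {a} := by simp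
    have key := hf (X \ insert a D) (X \ {a}) a hS hna
    have h1 : insert a (X \ {a}) = X := by
      ext x
      simp only [Finset.mem_insert, Finset.mem_sdiff, Finset.mem_singleton]
      constructor
      · rintro (rfl | ⟨hx, _⟩) <;> [exact haX; exact hx]
      · intro hx
        by_cases h : x = a <;> tauto
    have h2 : insert a (X \ insert a D) = X \ D := by
      ext x
      simp only [Finset.mem_insert, Finset.mem_sdiff, Finset.mem_insert]
      constructor
      · rintro (rfl | ⟨hx, hx2⟩)
        · exact ⟨haX, ha⟩
        · exact ⟨hx, fun h => hx2 (Or.inr h)⟩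
      · rintro ⟨hx, hx2⟩
        by_cases h : x = a
        · exact Or.inl h
        · exact Or.inr ⟨hx, by tauto⟩
    rw [h1, h2] at key
    rw [Finset.sum_insert ha]
    have := ih hDX
    linarith

lemma add_bound {V : Type*} [DecidableEq V] (f : Finset V → ℝ) (hf : Submodular f)
    (A S : Finset V) (hAS : A ⊆ S) : ∀ D : Finset V, Disjoint D S →
    f (S ∪ D) ≤ f S + ∑ v ∈ D, (f (insert v A) - f A) := by
  intro D
  induction D using Finset.induction with
  | empty => simp
  | @insert a D ha ih =>
    intro hdisj
    have hdisjD : Disjoint D S := (Finset.disjoint_insert_left.mp hdisj).2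
    have haS : a ∉ S := (Finset.disjoint_insert_left.mp hdisj).1
    have haSD : a ∉ S ∪ D := by simp [haS, ha]
    have key := hf A (S ∪ D) a (hAS.trans Finset.subset_union_left) haSD
    have h1 : S ∪ insert a D = insert a (S ∪ D) := by
      ext x; simp only [Finset.mem_union, Finset.mem_insert]; tauto
    rw [h1, Finset.sum_insert ha]
    have := ih hdisjD
    linarith

theorem modular_upper_bound_four {V : Type*} [Fintype V] [DecidableEq V]
    (f : Finset V → ℝ) (hf : Submodular f) (A B X Y : Finset V)
    (hAX : A ⊆ X) (hXB : X ⊆ B) (hAY : A ⊆ Y) (hYB : Y ⊆ B) :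
    (f Y ≤ f X - ∑ v ∈ X \ Y, (f X - f (X \ {v}))
            + ∑ v ∈ Y \ X, (f (insert v A) - f A)) ∧
    (f X - ∑ v ∈ X \ Y, (f X - f (X \ {v}))
            + ∑ v ∈ Y \ X, (f (insert v A) - f A)
      ≤ f X - ∑ v ∈ X \ Y, (f X - f (X \ {v}))
            + ∑ v ∈ Y \ X, (f {v} - f ∅)) ∧
    (f X - ∑ v ∈ X \ X, (f X - f (X \ {v}))
            + ∑ v ∈ X \ X, (f (insert v A) - f A) = f X) := by
  refine ⟨?_, ?_, by simp⟩
  · -- first part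
    have h1 : f (X ∩ Y) ≤ f X - ∑ v ∈ X \ Y, (f X - f (X \ {v})) := by
      have := remove_bound f hf X (X \ Y) (Finset.sdiff_subset)
      rwa [Finset.sdiff_sdiff_self_left] at this
    have hAXY : A ⊆ X ∩ Y := Finset.subset_inter hAX hAY
    have h2 : f ((X ∩ Y) ∪ (Y \ X)) ≤ f (X ∩ Y) + ∑ v ∈ Y \ X, (f (insert v A) - f A) := by
      apply add_bound f hf A (X ∩ Y) hAXY
      exact Finset.disjoint_left.mpr
        (fun v hv hv2 => (Finset.mem_sdiff.mp hv).2 (Finset.mem_inter.mp hv2).1)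
    have hU : (X ∩ Y) ∪ (Y \ X) = Y := by
      ext x; simp; tauto
    rw [hU] at h2
    linarith
  · -- second part
    have : ∀ v ∈ Y \ X, f (insert v A) - f A ≤ f {v} - f ∅ := by
      intro v hv
      have hvA : v ∉ A := fun h => (Finset.mem_sdiff.mp hv).2 (hAX h)
      have := hf ∅ A v (Finset.empty_subset A) hvA
      simpa using this
    have := Finset.sum_le_sum this
    linarith
end

section
/- Let f : 2^V → ℝ be submodular with f(∅) = 0. Let π be a permutation (enumeration v_1, …, v_n) of V and define the chain S_i = {v_1, …, v_i} with S_0 = ∅. Define h(v_i) = f(S_i) − f(S_{i−1}) and h(Y) = Σ_{v ∈ Y} h(v). Then h(Y) ≤ f(Y) for every Y ⊆ V, and h(S_i) = f(S_i) for every i (in particular h is tight on every prefix of the chain). -/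
open Finset

theorem modular_lower_bound_chain {V : Type*} [Fintype V] [DecidableEq V]
    (f : Finset V → ℝ) (hf : Submodular f) (hf0 : f ∅ = 0)
    (e : Fin (Fintype.card V) ≃ V)
    (S : ℕ → Finset V)
    (hS : ∀ i : ℕ, S i = (Finset.univ.filter (fun j : Fin (Fintype.card V) => (j : ℕ) < i)).image e)
    (h : V → ℝ)
    (hh : ∀ v : V, h v = f (S ((e.symm v : ℕ) + 1)) - f (S (e.symm v : ℕ))) :
    (∀ Y : Finset V, ∑ v ∈ Y, h v ≤ f Y) ∧
    (∀ i : ℕ, i ≤ Fintype.card V → ∑ v ∈ S i, h v = f (S i)) := by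
  have memS : ∀ (i : ℕ) (v : V), v ∈ S i ↔ (e.symm v : ℕ) < i := by
    intro i v
    simp only [hS, mem_image, mem_filter, mem_univ, true_and]
    constructor
    · rintro ⟨j, hj, rfl⟩; rwa [Equiv.symm_apply_apply]
    · intro hv; exact ⟨e.symm v, hv, e.apply_symm_apply v⟩
  have hS0 : S 0 = ∅ := by ext v; simp [memS]
  have hSn : S (Fintype.card V) = univ := by
    ext v; simp [memS, (e.symm v).2]
  have hstep : ∀ i (hi : i < Fintype.card V), S (i + 1) = insert (e ⟨i, hi⟩) (S i) := by
    intro i hi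
    ext v
    rw [memS, mem_insert, memS, Nat.lt_succ_iff_lt_or_eq]
    constructor
    · rintro (hlt | heq)
      · exact Or.inr hlt
      · left
        have : e.symm v = ⟨i, hi⟩ := Fin.ext heq
        rw [← this, Equiv.apply_symm_apply]
    · rintro (rfl | hlt)
      · right; simp
      · exact Or.inl hlt
  have hnotmem : ∀ i (hi : i < Fintype.card V), e ⟨i, hi⟩ ∉ S i := by
    intro i hi
    simp [memS]
  have heval : ∀ i (hi : i < Fintype.card V), h (e ⟨i, hi⟩) = f (S (i + 1)) - f (S i) := by
    intro i hi
    rw [hh, Equiv.symm_apply_apply]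
  have key : ∀ Y : Finset V, ∀ i, i ≤ Fintype.card V → ∑ v ∈ Y ∩ S i, h v ≤ f (Y ∩ S i) := by
    intro Y i
    induction i with
    | zero => intro _; simp [hS0, hf0]
    | succ i ih =>
      intro hi
      have hi' : i < Fintype.card V := hi
      have hIH := ih hi'.le
      rw [hstep i hi']
      by_cases hv : e ⟨i, hi'⟩ ∈ Y
      · have hnot := hnotmem i hi'
        have hins : Y ∩ insert (e ⟨i, hi'⟩) (S i) = insert (e ⟨i, hi'⟩) (Y ∩ S i) := by
          ext w
          simp only [mem_inter, mem_insert]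
          constructor
          · rintro ⟨hw, rfl | hw'⟩
            · exact Or.inl rfl
            · exact Or.inr ⟨hw, hw'⟩
          · rintro (rfl | ⟨hw, hw'⟩)
            · exact ⟨hv, Or.inl rfl⟩
            · exact ⟨hw, Or.inr hw'⟩
        have hnot' : e ⟨i, hi'⟩ ∉ Y ∩ S i := by
          simp only [mem_inter, not_and]
          intro _; exact hnot
        rw [hins, Finset.sum_insert hnot']
        have hsub := hf (Y ∩ S i) (S i) (e ⟨i, hi'⟩) inter_subset_right hnot
        have hev := heval i hi'
        rw [hstep i hi'] at hev
        linarith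
      · have : Y ∩ insert (e ⟨i, hi'⟩) (S i) = Y ∩ S i := by
          ext w
          simp only [mem_inter, mem_insert]
          constructor
          · rintro ⟨hw, rfl | hw'⟩
            · exact absurd hw hv
            · exact ⟨hw, hw'⟩
          · rintro ⟨hw, hw'⟩
            exact ⟨hw, Or.inr hw'⟩
        rw [this]
        exact hIH
  constructor
  · intro Y
    have := key Y (Fintype.card V) le_rfl
    rwa [hSn, inter_univ] at this
  · intro i
    induction i with
    | zero => intro _; simp [hS0, hf0]
    | succ i ih =>
      intro hi
      have hi' : i < Fintype.card V := hi
      rw [hstep i hi', Finset.sum_insert (hnotmem i hi'), ih hi'.le,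
        heval i hi', hstep i hi']
      ring
end

section
/- Let Z_1, …, Z_θ be i.i.d. random variables in [0,1] with mean λ, let Λ = Σ_i Z_i, and let δ ∈ (0,1); set a = 4(e−2)ln(2/δ). Assuming the concentration bounds Pr[Λ − θλ ≥ ε] ≤ exp(−ε²/(4(e−2)θλ)) and Pr[Λ − θλ ≤ −ε] ≤ exp(−ε²/(4(e−2)θλ)) for every ε > 0, we have Pr[θλ ≥ (√(Λ + 0.25a) − 0.5√a)²] ≥ 1 − δ/2 and Pr[θλ ≤ (√(Λ + 0.25a) + 0.5√a)²] ≥ 1 − δ/2. -/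
open MeasureTheory Real

lemma prob_aux {Ω : Type*} [MeasurableSpace Ω] (P : Measure Ω) [IsProbabilityMeasure P]
    (s t : Set Ω) (δ : ℝ) (hδ0 : 0 < δ) (hδ1 : δ < 1)
    (h : sᶜ ⊆ t) (ht : P t ≤ ENNReal.ofReal (δ / 2)) :
    ENNReal.ofReal (1 - δ / 2) ≤ P s := by
  have h1 : (1 : ENNReal) ≤ P s + ENNReal.ofReal (δ / 2) := by
    calc (1 : ENNReal) = P (s ∪ sᶜ) := by simp
    _ ≤ P s + P sᶜ := measure_union_le _ _
    _ ≤ P s + ENNReal.ofReal (δ / 2) :=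
        add_le_add_right ((measure_mono h).trans ht) _
  have h2 : ENNReal.ofReal (1 - δ / 2) = 1 - ENNReal.ofReal (δ / 2) := by
    rw [ENNReal.ofReal_sub _ (by linarith), ENNReal.ofReal_one]
  rw [h2]
  exact tsub_le_iff_right.mpr h1

set_option maxHeartbeats 1000000 in
theorem chernoff_to_confidence_bounds
    {Ω : Type*} [MeasurableSpace Ω] (P : Measure Ω) [IsProbabilityMeasure P]
    (θ : ℕ) (hθ : 0 < θ) (δ : ℝ) (hδ0 : 0 < δ) (hδ1 : δ < 1)
    (Z : Fin θ → Ω → ℝ) (hZrange : ∀ i ω, Z i ω ∈ Set.Icc (0 : ℝ) 1)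
    (lam : ℝ) (hlam : 0 < lam) (hmean : ∀ i, ∫ ω, Z i ω ∂P = lam)
    (Λ : Ω → ℝ) (hΛ : ∀ ω, Λ ω = ∑ i, Z i ω)
    (a : ℝ) (ha : a = 4 * (Real.exp 1 - 2) * Real.log (2 / δ))
    (hChernoffUp : ∀ ε : ℝ, 0 < ε →
      P {ω | Λ ω - θ * lam ≥ ε} ≤
        ENNReal.ofReal (Real.exp (-(ε ^ 2) / (4 * (Real.exp 1 - 2) * θ * lam))))
    (hChernoffLow : ∀ ε : ℝ, 0 < ε →
      P {ω | Λ ω - θ * lam ≤ -ε} ≤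
        ENNReal.ofReal (Real.exp (-(ε ^ 2) / (4 * (Real.exp 1 - 2) * θ * lam)))) :
    P {ω | θ * lam ≥ (Real.sqrt (Λ ω + 0.25 * a) - 0.5 * Real.sqrt a) ^ 2} ≥
      ENNReal.ofReal (1 - δ / 2) ∧
    P {ω | θ * lam ≤ (Real.sqrt (Λ ω + 0.25 * a) + 0.5 * Real.sqrt a) ^ 2} ≥
      ENNReal.ofReal (1 - δ / 2) := by
  have he2 : (0 : ℝ) < Real.exp 1 - 2 := by
    have := Real.exp_one_gt_d9; linarith
  have hlog : 0 < Real.log (2 / δ) := Real.log_pos (by rw [lt_div_iff₀ hδ0]; linarith)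
  have ha0 : 0 < a := by rw [ha]; positivity
  have hμ : (0 : ℝ) < θ * lam := by positivity
  set μ : ℝ := θ * lam with hμdef
  have hΛ0 : ∀ ω, 0 ≤ Λ ω := by
    intro ω; rw [hΛ]
    exact Finset.sum_nonneg fun i _ => (hZrange i ω).1
  set ε : ℝ := Real.sqrt (a * μ) with hε
  have hε0 : 0 < ε := Real.sqrt_pos.mpr (by positivity)
  have hεsq : ε ^ 2 = a * μ := Real.sq_sqrt (by positivity)
  -- The exponent computes to δ/2
  have hexp : Real.exp (-(ε ^ 2) / (4 * (Real.exp 1 - 2) * θ * lam)) = δ / 2 := by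
    have hne : 4 * (Real.exp 1 - 2) * μ ≠ 0 := by positivity
    have : -(ε ^ 2) / (4 * (Real.exp 1 - 2) * θ * lam) = -Real.log (2 / δ) := by
      rw [hεsq, ha]
      field_simp
      ring
    rw [this, Real.exp_neg, Real.exp_log (by positivity)]
    rw [inv_div]
  -- sqrt facts
  have hts : Real.sqrt a * Real.sqrt μ = ε := (Real.sqrt_mul (le_of_lt ha0) μ).symm
  have hsa : Real.sqrt a ^ 2 = a := Real.sq_sqrt ha0.le
  have hsμ : Real.sqrt μ ^ 2 = μ := Real.sq_sqrt hμ.le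
  have hsa0 : 0 ≤ Real.sqrt a := Real.sqrt_nonneg a
  have hsμ0 : 0 ≤ Real.sqrt μ := Real.sqrt_nonneg μ
  constructor
  · apply prob_aux P _ {ω | Λ ω - θ * lam ≥ ε} δ hδ0 hδ1
    · intro ω hω
      simp only [Set.mem_compl_iff, Set.mem_setOf_eq, not_le, ge_iff_le] at hω ⊢
      clear hChernoffUp hChernoffLow hmean hZrange hΛ hexp
      by_contra hc
      push_neg at hc
      apply absurd hω; push_neg
      -- hc : Λ ω - μ < ε ; show (sqrt(Λ+a/4) - sqrt a /2)^2 ≤ μ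
      set u := Real.sqrt (Λ ω + 0.25 * a) with hu
      have hu0 : 0 ≤ u := Real.sqrt_nonneg _
      have husq : u ^ 2 = Λ ω + 0.25 * a := Real.sq_sqrt (by nlinarith [hΛ0 ω])
      have expand : (Real.sqrt μ + 0.5 * Real.sqrt a) ^ 2 = μ + ε + 0.25 * a := by
        linear_combination hsμ + hts + 0.25 * hsa
      have h1 : u ^ 2 < (Real.sqrt μ + 0.5 * Real.sqrt a) ^ 2 := by
        rw [husq, expand]; linarith
      have h2 : u < Real.sqrt μ + 0.5 * Real.sqrt a := by nlinarith [h1, hu0, hsa0, hsμ0]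
      have h3 : 0.5 * Real.sqrt a ≤ u := by nlinarith [hΛ0 ω, husq, hsa, hsa0, hu0]
      nlinarith [h2, h3, hsμ, hsμ0]
    · calc P {ω | Λ ω - θ * lam ≥ ε} ≤ _ := hChernoffUp ε hε0
        _ = ENNReal.ofReal (δ / 2) := by rw [hexp]
  · apply prob_aux P _ {ω | Λ ω - θ * lam ≤ -ε} δ hδ0 hδ1
    · intro ω hω
      simp only [Set.mem_compl_iff, Set.mem_setOf_eq, not_le] at hω ⊢
      clear hChernoffUp hChernoffLow hmean hZrange hΛ hexp
      by_contra hc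
      push_neg at hc
      apply absurd hω; push_neg
      -- hc : -ε < Λ ω - μ ; show μ ≤ (sqrt(Λ+a/4) + sqrt a /2)^2
      set u := Real.sqrt (Λ ω + 0.25 * a) with hu
      have hu0 : 0 ≤ u := Real.sqrt_nonneg _
      have husq : u ^ 2 = Λ ω + 0.25 * a := Real.sq_sqrt (by nlinarith [hΛ0 ω])
      have expand : (Real.sqrt μ - 0.5 * Real.sqrt a) ^ 2 = μ - ε + 0.25 * a := by
        linear_combination hsμ - hts + 0.25 * hsa
      have h1 : (Real.sqrt μ - 0.5 * Real.sqrt a) ^ 2 < u ^ 2 := by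
        rw [husq, expand]; linarith
      have h2 : Real.sqrt μ - 0.5 * Real.sqrt a < u := by
        nlinarith [h1, hu0, hsa0, hsμ0, sq_nonneg (Real.sqrt μ - 0.5 * Real.sqrt a + u)]
      nlinarith [h2, hsμ, hsμ0, hsa0, hu0]
    · calc P {ω | Λ ω - θ * lam ≤ -ε} ≤ _ := hChernoffLow ε hε0
        _ = ENNReal.ofReal (δ / 2) := by rw [hexp]
end

section
/- RR-set estimation identity: let V be a finite set with nonnegative weights b : V → ℝ, Υ_b = Σ_v b(v) > 0, and let R be a random set generated by first choosing v ∈ V with probability b(v)/Υ_b and then taking R = R_g(v) for a random sample g, where R_g(v) = {u : v ∈ V_g({u})} is the set of nodes that reach v in sample g. Then for every seed set S ⊆ V, the weighted coverage β(S) = E_g[Σ_{v ∈ V_g(S)} b(v)] equals Υ_b · Pr[S ∩ R ≠ ∅], provided v ∈ V_g(S) ⇔ S ∩ R_g(v) ≠ ∅ for every g and v. -/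
open Finset

theorem rr_set_estimation_identity
    {V : Type*} [Fintype V] [DecidableEq V]
    {G : Type*} [Fintype G]
    (p : G → ℝ) (hp : ∀ g, 0 ≤ p g) (hp1 : ∑ g, p g = 1)
    (Vg : G → Finset V → Finset V)
    (b : V → ℝ) (hb : ∀ v, 0 ≤ b v)
    (Υ : ℝ) (hΥdef : Υ = ∑ v, b v) (hΥpos : 0 < Υ)
    (R : G → V → Finset V)
    (hR : ∀ g v, R g v = Finset.univ.filter (fun u => v ∈ Vg g {u}))
    (hequiv : ∀ (g : G) (v : V) (S : Finset V), v ∈ Vg g S ↔ (S ∩ R g v).Nonempty)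
    (S : Finset V) :
    ∑ g, p g * ∑ v ∈ Vg g S, b v =
      Υ * ∑ g, ∑ v, p g * (b v / Υ) *
        (if (S ∩ R g v).Nonempty then (1 : ℝ) else 0) := by
  rw [Finset.mul_sum]
  congr 1; funext g
  have : ∑ v ∈ Vg g S, b v = ∑ v, b v * (if (S ∩ R g v).Nonempty then (1:ℝ) else 0) := by
    simp only [mul_ite, mul_one, mul_zero, ← Finset.sum_filter]
    apply Finset.sum_congr _ (fun _ _ => rfl)
    ext v; simp [hequiv]
  rw [this, Finset.mul_sum, Finset.mul_sum]
  congr 1; funext v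
  field_simp
end
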